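/- arXiv:2510.20251 — 3 statements merged into one kernel-verified Lean document; each statement's English description precedes it below -/
import Mathlib

section
/- Let k ≥ t+2 ≥ 3 and let n be an integer with n ≥ L(k,t) = (t+1) + (k-t+1)·log₂((t+1)(k-t+1)). Define f(m) = (k-t+1)^(m-t)·C(m,t)·S(n-m, k-m) for t ≤ m ≤ k-1. Then f is strictly decreasing in m on [t, k-1], and also (k-t+1)^(m-t)·S(n-m,k-m) is strictly decreasing in m on [t, k-1]. -/
set_option maxHeartbeats 1000000

/-- Stirling numbers of the second kind. -/
def stirling : ℕ → ℕ → ℕ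
  | 0, 0 => 1
  | 0, _ + 1 => 0
  | _ + 1, 0 => 0
  | n + 1, k + 1 => stirling n k + (k + 1) * stirling n (k + 1)

/-- The threshold function `L(k,t) = (t+1) + (k-t+1)·log₂((t+1)(k-t+1))`. -/
noncomputable def Lkt (k t : ℕ) : ℝ :=
  ((t : ℝ) + 1) + ((k : ℝ) - t + 1) * Real.logb 2 (((t : ℝ) + 1) * ((k : ℝ) - t + 1))

lemma stirling_zero_succ (i : ℕ) : stirling 0 (i+1) = 0 := rfl
lemma stirling_succ_zero (n : ℕ) : stirling (n+1) 0 = 0 := rfl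
lemma stirling_succ (n i : ℕ) :
    stirling (n+1) (i+1) = stirling n i + (i+1) * stirling n (i+1) := rfl

lemma stirling_identity (n : ℕ) : ∀ j : ℕ,
    ∑ i ∈ Finset.range (j+1), j.choose i * (i.factorial * stirling n i) = j ^ n := by
  induction n with
  | zero =>
    intro j
    rw [Finset.sum_range_succ']
    have : ∀ i ∈ Finset.range j,
        j.choose (i+1) * ((i+1).factorial * stirling 0 (i+1)) = 0 := by
      intro i _; rw [stirling_zero_succ]; ring
    rw [Finset.sum_congr rfl this]
    simp [stirling]
  | succ n ih =>
    intro j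
    rw [Finset.sum_range_succ']
    have h0 : j.choose 0 * (Nat.factorial 0 * stirling (n+1) 0) = 0 := by
      rw [stirling_succ_zero]; ring
    rw [h0, add_zero]
    have hterm : ∀ i ∈ Finset.range j,
        j.choose (i+1) * ((i+1).factorial * stirling (n+1) (i+1))
          = (j - i) * (j.choose i * (i.factorial * stirling n i))
            + (i+1) * (j.choose (i+1) * ((i+1).factorial * stirling n (i+1))) := by
      intro i _
      rw [stirling_succ, Nat.factorial_succ]
      have h1 : j.choose (i+1) * (i+1) = j.choose i * (j - i) := Nat.choose_succ_right_eq j i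
      calc j.choose (i+1) * ((i+1) * i.factorial * (stirling n i + (i+1) * stirling n (i+1)))
          = (j.choose (i+1) * (i+1)) * (i.factorial * stirling n i)
            + (i+1) * (j.choose (i+1) * ((i+1) * i.factorial * stirling n (i+1))) := by ring
        _ = (j.choose i * (j - i)) * (i.factorial * stirling n i)
            + (i+1) * (j.choose (i+1) * ((i+1) * i.factorial * stirling n (i+1))) := by rw [h1]
        _ = (j - i) * (j.choose i * (i.factorial * stirling n i))
            + (i+1) * (j.choose (i+1) * ((i+1) * i.factorial * stirling n (i+1))) := by ring
    rw [Finset.sum_congr rfl hterm, Finset.sum_add_distrib]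
    have e1 : ∑ i ∈ Finset.range j, (j - i) * (j.choose i * (i.factorial * stirling n i))
        = ∑ i ∈ Finset.range (j+1), (j - i) * (j.choose i * (i.factorial * stirling n i)) := by
      rw [Finset.sum_range_succ, Nat.sub_self, zero_mul, add_zero]
    have e2 : ∑ i ∈ Finset.range j,
          (i+1) * (j.choose (i+1) * ((i+1).factorial * stirling n (i+1)))
        = ∑ i ∈ Finset.range (j+1), i * (j.choose i * (i.factorial * stirling n i)) := by
      rw [Finset.sum_range_succ' (fun i => i * (j.choose i * (i.factorial * stirling n i))) j]
      simp
    rw [e1, e2, ← Finset.sum_add_distrib]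
    have e3 : ∀ i ∈ Finset.range (j+1),
        (j - i) * (j.choose i * (i.factorial * stirling n i))
          + i * (j.choose i * (i.factorial * stirling n i))
          = j * (j.choose i * (i.factorial * stirling n i)) := by
      intro i hi
      have := Finset.mem_range.mp hi
      rw [← add_mul]
      congr 1
      omega
    rw [Finset.sum_congr rfl e3, ← Finset.mul_sum, ih j, pow_succ]
    ring

lemma stirling_upper (n j : ℕ) : j.factorial * stirling n j ≤ j ^ n := by
  have h := stirling_identity n j
  calc j.factorial * stirling n j = j.choose j * (j.factorial * stirling n j) := by
        rw [Nat.choose_self, one_mul]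
    _ ≤ ∑ i ∈ Finset.range (j+1), j.choose i * (i.factorial * stirling n i) :=
        Finset.single_le_sum (f := fun i => j.choose i * (i.factorial * stirling n i))
          (fun _ _ => Nat.zero_le _) (Finset.self_mem_range_succ j)
    _ = j ^ n := h

lemma stirling_lower (n j : ℕ) :
    (j+1) ^ n ≤ (j+1).factorial * stirling n (j+1) + (j+1) * j ^ n := by
  have hid := stirling_identity n (j+1)
  rw [Finset.sum_range_succ, Nat.choose_self, one_mul] at hid
  have hbound : ∑ i ∈ Finset.range (j+1), (j+1).choose i * (i.factorial * stirling n i)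
      ≤ (j+1) * j ^ n := by
    have hpt : ∀ i ∈ Finset.range (j+1),
        (j+1).choose i * (i.factorial * stirling n i)
          ≤ (j+1) * (j.choose i * (i.factorial * stirling n i)) := by
      intro i hi
      have hij : i < j + 1 := Finset.mem_range.mp hi
      have h1 : (j+1).choose i ≤ (j+1) * j.choose i := by
        have h2 : (j+1).choose (i+1) * (i+1) = (j+1).choose i * (j + 1 - i) :=
          Nat.choose_succ_right_eq (j+1) i
        have h3 : (j+1) * j.choose i = (j+1).choose (i+1) * (i+1) :=
          Nat.add_one_mul_choose_eq j i
        have h4 : 1 ≤ j + 1 - i := by omega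
        calc (j+1).choose i ≤ (j+1).choose i * (j + 1 - i) :=
              Nat.le_mul_of_pos_right _ (by omega)
          _ = (j+1).choose (i+1) * (i+1) := h2.symm
          _ = (j+1) * j.choose i := h3.symm
      calc (j+1).choose i * (i.factorial * stirling n i)
          ≤ ((j+1) * j.choose i) * (i.factorial * stirling n i) :=
            Nat.mul_le_mul_right _ h1
        _ = (j+1) * (j.choose i * (i.factorial * stirling n i)) := by ring
    calc ∑ i ∈ Finset.range (j+1), (j+1).choose i * (i.factorial * stirling n i)
        ≤ ∑ i ∈ Finset.range (j+1), (j+1) * (j.choose i * (i.factorial * stirling n i)) :=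
          Finset.sum_le_sum hpt
      _ = (j+1) * ∑ i ∈ Finset.range (j+1), j.choose i * (i.factorial * stirling n i) := by
          rw [Finset.mul_sum]
      _ = (j+1) * j ^ n := by rw [stirling_identity n j]
  omega

/-- Core numeric comparison. `j'+2` plays the role of `j`. -/
lemma stirling_core (x j' Kc : ℕ)
    (hstar : (Kc + (j'+1)) * (j'+1) ^ x < (j'+2) ^ x) :
    Kc * stirling x (j'+1) < stirling (x+1) (j'+2) := by
  set j := j' + 2 with hj
  have h1 : (j'+1).factorial * stirling x (j'+1) ≤ (j'+1) ^ x := stirling_upper x (j'+1)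
  have h2 : j ^ (x+1) ≤ j.factorial * stirling (x+1) j + j * (j'+1) ^ (x+1) := by
    have := stirling_lower (x+1) (j'+1)
    simpa [hj] using this
  have h3 : j * (Kc * (j'+1) ^ x) + j * (j'+1) ^ (x+1) < j ^ (x+1) := by
    have hmul : j * ((Kc + (j'+1)) * (j'+1) ^ x) < j * (j'+2) ^ x :=
      Nat.mul_lt_mul_of_pos_left hstar (by omega)
    calc j * (Kc * (j'+1) ^ x) + j * (j'+1) ^ (x+1)
        = j * ((Kc + (j'+1)) * (j'+1) ^ x) := by rw [pow_succ]; ring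
      _ < j * (j'+2) ^ x := hmul
      _ = j ^ (x+1) := by rw [pow_succ, ← hj]; ring
  have h4 : j * (Kc * (j'+1) ^ x) < j.factorial * stirling (x+1) j :=
    Nat.lt_of_add_lt_add_right (lt_of_lt_of_le h3 h2)
  have h5 : j.factorial * (Kc * stirling x (j'+1)) ≤ j * (Kc * (j'+1) ^ x) := by
    have hf : j.factorial = j * (j'+1).factorial := by
      rw [hj]; rfl
    calc j.factorial * (Kc * stirling x (j'+1))
        = j * (Kc * ((j'+1).factorial * stirling x (j'+1))) := by rw [hf]; ring
      _ ≤ j * (Kc * (j'+1) ^ x) := by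
          apply Nat.mul_le_mul_left
          exact Nat.mul_le_mul_left _ h1
  have h6 : j.factorial * (Kc * stirling x (j'+1)) < j.factorial * stirling (x+1) j :=
    lt_of_le_of_lt h5 h4
  exact Nat.lt_of_mul_lt_mul_left h6

lemma choose_succ_le (m t : ℕ) (ht : t ≤ m) :
    (m+1).choose t ≤ (t+1) * m.choose t := by
  cases t with
  | zero => simp
  | succ s =>
    rw [Nat.choose_succ_succ]
    have h2 : m.choose (s+1) * (s+1) = m.choose s * (m - s) := Nat.choose_succ_right_eq m s
    have h3 : m.choose s ≤ (s+1) * m.choose (s+1) := by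
      have h4 : 1 ≤ m - s := by omega
      calc m.choose s ≤ m.choose s * (m - s) := Nat.le_mul_of_pos_right _ (by omega)
        _ = m.choose (s+1) * (s+1) := h2.symm
        _ = (s+1) * m.choose (s+1) := by ring
    calc m.choose s + m.choose (s+1) ≤ (s+1) * m.choose (s+1) + m.choose (s+1) := by omega
      _ = (s+1+1) * m.choose (s+1) := by ring



lemma log_ratio (y : ℝ) (hy : 2 ≤ y) : 1 / y < Real.log y - Real.log (y - 1) := by
  have h1 : (0:ℝ) < y - 1 := by linarith
  have hy0 : (0:ℝ) < y := by linarith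
  have h2 : Real.log ((y-1)/y) < (y-1)/y - 1 := by
    apply Real.log_lt_sub_one_of_pos (by positivity)
    intro h
    rw [div_eq_one_iff_eq (by positivity)] at h
    linarith
  rw [Real.log_div (by linarith) (by positivity)] at h2
  have h3 : (y-1)/y - 1 = -(1/y) := by field_simp; ring
  rw [h3] at h2
  linarith

lemma star_main (k t m n : ℕ) (ht : 1 ≤ t) (hm : t ≤ m) (hmk : m + 2 ≤ k)
    (hn : (n : ℝ) ≥ Lkt k t) :
    m + 2 ≤ n ∧
    ((t+1)*(k - t + 1) + (k - m - 1)) * (k - m - 1) ^ (n - m - 1)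
      < (k - m) ^ (n - m - 1) := by
  have htk : t ≤ k := by omega
  set a : ℕ := k - t with ha
  set d : ℕ := m - t with hd
  have haa : 2 ≤ a := by omega
  have hda : d + 2 ≤ a := by omega
  set T : ℝ := (t : ℝ) with hT
  set A : ℝ := (a : ℝ) with hA
  set D : ℝ := (d : ℝ) with hD
  have hT1 : 1 ≤ T := by rw [hT]; exact_mod_cast ht
  have hA2 : 2 ≤ A := by rw [hA]; exact_mod_cast haa
  have hD0 : 0 ≤ D := by positivity
  have hDA : D + 2 ≤ A := by rw [hA, hD]; exact_mod_cast hda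
  have hkT : (k : ℝ) - T = A := by rw [hA, ha, Nat.cast_sub htk]
  have hmT : (m : ℝ) = T + D := by rw [hT, hD, hd]; push_cast [Nat.cast_sub hm]; ring
  set Kr : ℝ := (T + 1) * (A + 1) with hKr
  have hKr4 : 4 ≤ Kr := by nlinarith
  -- log facts
  have hl2a : (0.6931:ℝ) < Real.log 2 := by
    have := Real.log_two_gt_d9; linarith
  have hl2b : Real.log 2 < 0.6932 := by
    have := Real.log_two_lt_d9; linarith
  have hl2pos : (0:ℝ) < Real.log 2 := by linarith
  set P : ℝ := Real.log Kr with hP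
  have hP2 : 2 * Real.log 2 ≤ P := by
    have h4 : Real.log 4 ≤ Real.log Kr := Real.log_le_log (by norm_num) hKr4
    have : ((2:ℝ))^(2:ℕ) = 4 := by norm_num
    rw [hP]
    calc 2 * Real.log 2 = Real.log ((2:ℝ)^(2:ℕ)) := by
          rw [Real.log_pow]; push_cast; ring
      _ = Real.log 4 := by rw [this]
      _ ≤ Real.log Kr := h4
  have hPpos : 0 < P := by linarith
  -- the hypothesis, unfolded
  have hn' : (n : ℝ) ≥ T + 1 + (A + 1) * (P / Real.log 2) := by
    have : Lkt k t = T + 1 + (A + 1) * (P / Real.log 2) := by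
      rw [Lkt, hkT, Real.logb, hP, hKr]
    linarith [hn, this ▸ hn]
  have hQ : 2 ≤ P / Real.log 2 := by
    rw [le_div_iff₀ hl2pos]; linarith
  -- n is large : m + 2 ≤ n
  have hn2 : m + 2 ≤ n := by
    have hc : (m : ℝ) + 2 ≤ (n : ℝ) := by
      have h1 : (A + 1) * (P / Real.log 2) ≥ (A + 1) * 2 := by nlinarith
      rw [hmT]; nlinarith
    rw [hmT] at hc
    have hc2 : (m:ℝ) + 2 ≤ (n:ℝ) := by rw [hmT]; linarith
    exact_mod_cast hc2
  refine ⟨hn2, ?_⟩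
  -- natural number abbreviations
  set x : ℕ := n - m - 1 with hx
  set j : ℕ := k - m with hj
  have hj2 : 2 ≤ j := by omega
  have hjad : j = a - d := by omega
  set jr : ℝ := (j : ℝ) with hjr
  have hjrAD : jr = A - D := by
    rw [hjr, hjad, hA, hD, Nat.cast_sub (by omega)]
  have hjr2 : 2 ≤ jr := by rw [hjr]; exact_mod_cast hj2
  have hxr : (x : ℝ) = (n : ℝ) - (m : ℝ) - 1 := by
    rw [hx]
    rw [Nat.cast_sub (by omega), Nat.cast_sub (by omega)]
    push_cast; ring
  have hxlb : (x : ℝ) ≥ (A + 1) * (P / Real.log 2) - D - 2 + 1 := by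
    rw [hxr, hmT]; linarith
  set Cr : ℝ := Kr + jr - 1 with hCr
  have hCr1 : 1 < Cr := by rw [hCr]; linarith
  have hlogCr : Real.log Cr ≤ P + 1/2 := by
    have hle : Cr ≤ 3/2 * Kr := by
      rw [hCr, hjrAD]; nlinarith
    have h1 : Real.log Cr ≤ Real.log (3/2 * Kr) := Real.log_le_log (by linarith) hle
    have h2 : Real.log (3/2 * Kr) = Real.log (3/2) + Real.log Kr := by
      rw [Real.log_mul (by norm_num) (by linarith)]
    have h3 : Real.log (3/2) ≤ 1/2 := by
      have := Real.log_le_sub_one_of_pos (show (0:ℝ) < 3/2 by norm_num)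
      linarith
    rw [hP]; linarith
  -- key analytic inequality
  have hkey : (x : ℝ) ≥ jr * Real.log Cr := by
    have hmain : (A + 1) * (P / Real.log 2) - D - 1 ≥ (A - D) * (P + 1/2) := by
      set Q : ℝ := P / Real.log 2 with hQdef
      have hQl : Q * Real.log 2 = P := by
        rw [hQdef]; field_simp
      nlinarith [mul_nonneg hD0 (show Q * Real.log 2 - 1/2 ≥ 0 by nlinarith),
        mul_nonneg (show (0:ℝ) ≤ A - 2 by linarith) (show Q * (1 - Real.log 2) - 1/2 ≥ 0 by nlinarith),
        mul_nonneg (show (0:ℝ) ≤ Q - 2 by linarith) (show (0:ℝ) ≤ 1 - Real.log 2 by linarith)]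
    have h2 : jr * Real.log Cr ≤ (A - D) * (P + 1/2) := by
      rw [hjrAD]
      have hAD : (0:ℝ) ≤ A - D := by linarith
      have hCpos : 0 ≤ Real.log Cr := le_of_lt (Real.log_pos hCr1)
      exact mul_le_mul_of_nonneg_left hlogCr hAD
    linarith
  -- conclude the real inequality
  have hCrpos : (0:ℝ) < Cr := by linarith
  have hlogCrpos : 0 < Real.log Cr := Real.log_pos hCr1
  have hjrpos : (0:ℝ) < jr := by linarith
  have hxpos : (0:ℝ) < (x : ℝ) := by
    have h := mul_pos hjrpos hlogCrpos
    linarith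
  have hr := log_ratio jr hjr2
  have h5 : Real.log Cr ≤ (x : ℝ) * (1 / jr) := by
    rw [mul_one_div, le_div_iff₀ hjrpos]
    linarith [hkey, mul_comm (Real.log Cr) jr]
  have hlog : Real.log Cr + (x:ℝ) * Real.log (jr - 1) < (x:ℝ) * Real.log jr := by
    have h6 : (x:ℝ) * (1/jr) < (x:ℝ) * (Real.log jr - Real.log (jr - 1)) :=
      mul_lt_mul_of_pos_left hr hxpos
    rw [mul_sub] at h6
    linarith
  have hreal : Cr * (jr - 1) ^ x < jr ^ x := by
    have hp1 : (0:ℝ) < (jr - 1) ^ x := pow_pos (by linarith) x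
    have hp2 : (0:ℝ) < jr ^ x := pow_pos hjrpos x
    rw [← Real.log_lt_log_iff (mul_pos hCrpos hp1) hp2, Real.log_mul (by linarith) (ne_of_gt hp1),
      Real.log_pow, Real.log_pow]
    exact hlog
  -- cast back to ℕ
  have hjm1 : ((j - 1 : ℕ) : ℝ) = jr - 1 := by
    rw [hjr, Nat.cast_sub (by omega)]
    push_cast; ring
  have hKcast : (((t+1)*(k - t + 1) : ℕ) : ℝ) = Kr := by
    rw [hKr, hT, hA, ha]
    push_cast [Nat.cast_sub htk]
    ring
  have hc : ((((t+1)*(k - t + 1) + (j - 1)) * (j - 1) ^ x : ℕ) : ℝ)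
      < ((j ^ x : ℕ) : ℝ) := by
    rw [Nat.cast_mul, Nat.cast_add, Nat.cast_pow, hjm1, hKcast, Nat.cast_pow]
    have he : Kr + (jr - 1) = Cr := by rw [hCr]; ring
    rw [he, ← hjr]
    exact hreal
  exact_mod_cast hc


theorem stmt_9 (k t n : ℕ) (ht : 1 ≤ t) (hk : t + 2 ≤ k) (hn : (n : ℝ) ≥ Lkt k t) :
    (∀ m : ℕ, t ≤ m → m + 1 ≤ k - 1 →
      (k - t + 1) ^ (m + 1 - t) * Nat.choose (m + 1) t * stirling (n - (m + 1)) (k - (m + 1)) <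
        (k - t + 1) ^ (m - t) * Nat.choose m t * stirling (n - m) (k - m)) ∧
    (∀ m : ℕ, t ≤ m → m + 1 ≤ k - 1 →
      (k - t + 1) ^ (m + 1 - t) * stirling (n - (m + 1)) (k - (m + 1)) <
        (k - t + 1) ^ (m - t) * stirling (n - m) (k - m)) := by
  have key : ∀ m : ℕ, t ≤ m → m + 1 ≤ k - 1 →
      ((t+1)*(k-t+1)) * stirling (n - (m+1)) (k - (m+1)) < stirling (n-m) (k-m) := by
    intro m hm hmk1
    have hmk : m + 2 ≤ k := by omega
    obtain ⟨hn2, hstar⟩ := star_main k t m n ht hm hmk hn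
    have e1 : n - (m+1) = n - m - 1 := by omega
    have e2 : k - (m+1) = k - m - 1 := by omega
    rw [e1, e2]
    set x : ℕ := n - m - 1 with hx
    obtain ⟨j', hj'⟩ : ∃ j', k - m = j' + 2 := ⟨k - m - 2, by omega⟩
    have ex : n - m = x + 1 := by omega
    have ej : k - m - 1 = j' + 1 := by omega
    rw [ej, hj', ex]
    apply stirling_core
    rw [ej, hj'] at hstar
    exact hstar
  have hkt1 : 1 ≤ k - t + 1 := by omega
  have hpowpos : ∀ m : ℕ, 0 < (k - t + 1) ^ (m - t) := fun m => pow_pos (by omega) _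
  constructor
  · intro m hm hmk1
    have h1 := key m hm hmk1
    have hC : Nat.choose (m+1) t ≤ (t+1) * Nat.choose m t := choose_succ_le m t hm
    have hCpos : 0 < Nat.choose m t := Nat.choose_pos hm
    have epow : (k-t+1) ^ (m+1-t) = (k-t+1) ^ (m-t) * (k-t+1) := by
      rw [show m+1-t = (m-t)+1 by omega, pow_succ]
    calc (k-t+1) ^ (m+1-t) * Nat.choose (m+1) t * stirling (n-(m+1)) (k-(m+1))
        = (k-t+1) ^ (m-t) * ((k-t+1) * Nat.choose (m+1) t * stirling (n-(m+1)) (k-(m+1))) := by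
          rw [epow]; ring
      _ ≤ (k-t+1) ^ (m-t) * (Nat.choose m t * (((t+1)*(k-t+1)) * stirling (n-(m+1)) (k-(m+1)))) := by
          apply Nat.mul_le_mul_left
          calc (k-t+1) * Nat.choose (m+1) t * stirling (n-(m+1)) (k-(m+1))
              ≤ (k-t+1) * ((t+1) * Nat.choose m t) * stirling (n-(m+1)) (k-(m+1)) := by
                apply Nat.mul_le_mul_right
                exact Nat.mul_le_mul_left _ hC
            _ = Nat.choose m t * (((t+1)*(k-t+1)) * stirling (n-(m+1)) (k-(m+1))) := by ring
      _ < (k-t+1) ^ (m-t) * (Nat.choose m t * stirling (n-m) (k-m)) := by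
          apply Nat.mul_lt_mul_of_pos_left _ (hpowpos m)
          exact Nat.mul_lt_mul_of_pos_left h1 hCpos
      _ = (k-t+1) ^ (m-t) * Nat.choose m t * stirling (n-m) (k-m) := by ring
  · intro m hm hmk1
    have h1 := key m hm hmk1
    have epow : (k-t+1) ^ (m+1-t) = (k-t+1) ^ (m-t) * (k-t+1) := by
      rw [show m+1-t = (m-t)+1 by omega, pow_succ]
    calc (k-t+1) ^ (m+1-t) * stirling (n-(m+1)) (k-(m+1))
        = (k-t+1) ^ (m-t) * ((k-t+1) * stirling (n-(m+1)) (k-(m+1))) := by rw [epow]; ring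
      _ ≤ (k-t+1) ^ (m-t) * (((t+1)*(k-t+1)) * stirling (n-(m+1)) (k-(m+1))) := by
          apply Nat.mul_le_mul_left
          apply Nat.mul_le_mul_right
          have : 1 ≤ t + 1 := by omega
          calc k - t + 1 = 1 * (k - t + 1) := (one_mul _).symm
            _ ≤ (t+1) * (k-t+1) := Nat.mul_le_mul_right _ this
      _ < (k-t+1) ^ (m-t) * stirling (n-m) (k-m) :=
          Nat.mul_lt_mul_of_pos_left h1 (hpowpos m)
end

section
/- Let k ≥ t+3 ≥ 4 and n ≥ 2L(k,t), where L(k,t) = (t+1)+(k-t+1)·log₂((t+1)(k-t+1)). Then the function s ↦ S(n-t-s, k-t-s) + s·t is decreasing as s ranges over the integers in [2, k-t-1]. -/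
lemma stirling_eq_zero_of_lt : ∀ n k : ℕ, n < k → stirling n k = 0
  | 0, _ + 1, _ => rfl
  | n + 1, k + 1, h => by
    have h1 : stirling n k = 0 := stirling_eq_zero_of_lt n k (by omega)
    have h2 : stirling n (k + 1) = 0 := stirling_eq_zero_of_lt n (k + 1) (by omega)
    simp [stirling, h1, h2]

lemma stirling_self : ∀ n : ℕ, stirling n n = 1
  | 0 => rfl
  | n + 1 => by
    have h1 := stirling_self n
    have h2 : stirling n (n + 1) = 0 := stirling_eq_zero_of_lt n (n + 1) (by omega)
    simp [stirling, h1, h2]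

lemma pow_le_stirling : ∀ m j : ℕ, 2 ≤ j → j ≤ m → 2 ^ (m - j) ≤ stirling m j
  | 0, j, h2, hm => by omega
  | m + 1, j, h2, hm => by
    rcases Nat.eq_or_lt_of_le hm with h | h
    · simp [← h, stirling_self]
    · obtain ⟨j', rfl⟩ : ∃ j', j = j' + 1 := ⟨j - 1, by omega⟩
      have hij : j' + 1 ≤ m := by omega
      have ih := pow_le_stirling m (j' + 1) h2 hij
      have : m + 1 - (j' + 1) = (m - (j' + 1)) + 1 := by omega
      rw [this]
      show 2 ^ (m - (j' + 1)) * 2 ≤ stirling m j' + (j' + 1) * stirling m (j' + 1)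
      have h2' : 2 ≤ j' + 1 := h2
      calc 2 ^ (m - (j' + 1)) * 2 ≤ stirling m (j' + 1) * (j' + 1) :=
            Nat.mul_le_mul ih h2'
        _ = (j' + 1) * stirling m (j' + 1) := Nat.mul_comm _ _
        _ ≤ stirling m j' + (j' + 1) * stirling m (j' + 1) := Nat.le_add_left _ _

theorem stmt_11 (k t n : ℕ) (ht : 1 ≤ t) (hk : t + 3 ≤ k) (hn : (n : ℝ) ≥ 2 * Lkt k t) :
    ∀ s : ℕ, 2 ≤ s → s + 1 ≤ k - t - 1 →
      stirling (n - t - (s + 1)) (k - t - (s + 1)) + (s + 1) * t ≤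
        stirling (n - t - s) (k - t - s) + s * t := by
  intro s hs hsk
  -- From the real hypothesis, derive n ≥ k + t + 23
  have htR : (1 : ℝ) ≤ t := by exact_mod_cast ht
  have hkR : (t : ℝ) + 3 ≤ k := by exact_mod_cast hk
  have h4 : (4 : ℝ) ≤ (k : ℝ) - t + 1 := by linarith
  have h8 : (8 : ℝ) ≤ ((t : ℝ) + 1) * ((k : ℝ) - t + 1) := by nlinarith
  have hlog : (3 : ℝ) ≤ Real.logb 2 (((t : ℝ) + 1) * ((k : ℝ) - t + 1)) := by
    have : Real.logb 2 8 ≤ Real.logb 2 (((t : ℝ) + 1) * ((k : ℝ) - t + 1)) :=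
      Real.logb_le_logb_of_le (by norm_num) (by norm_num) h8
    have h83 : Real.logb 2 8 = 3 := by
      rw [show (8 : ℝ) = 2 ^ (3 : ℕ) by norm_num, Real.logb_pow,
        Real.logb_self_eq_one (by norm_num)]
      norm_num
    linarith [this, h83.ge]
  have hL : Lkt k t ≥ ((t : ℝ) + 1) + ((k : ℝ) - t + 1) * 3 := by
    unfold Lkt
    nlinarith
  have hnR : (k : ℝ) + t + 23 ≤ n := by nlinarith
  have hnk : k + t + 23 ≤ n := by exact_mod_cast hnR
  -- set up structure
  obtain ⟨j', hj'⟩ : ∃ j', k - t - s = j' + 2 := ⟨k - t - s - 2, by omega⟩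
  obtain ⟨a', ha'⟩ : ∃ a', n - t - s = a' + 1 := ⟨n - t - s - 1, by omega⟩
  have hjk : k - t - (s + 1) = j' + 1 := by omega
  have hank : n - t - (s + 1) = a' := by omega
  have hdiff : a' - (j' + 2) = n - k - 1 := by omega
  have hle : j' + 2 ≤ a' := by omega
  rw [hjk, hank, ha', hj']
  show stirling a' (j' + 1) + (s + 1) * t ≤
      stirling a' (j' + 1) + (j' + 2) * stirling a' (j' + 2) + s * t
  have key : t ≤ (j' + 2) * stirling a' (j' + 2) := by
    have h1 : t < 2 ^ t := Nat.lt_two_pow_self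
    have h2 : 2 ^ t ≤ 2 ^ (a' - (j' + 2)) := by
      apply Nat.pow_le_pow_right (by norm_num)
      omega
    have h3 := pow_le_stirling a' (j' + 2) (by omega) hle
    calc t ≤ 2 ^ t := h1.le
      _ ≤ 2 ^ (a' - (j' + 2)) := h2
      _ ≤ stirling a' (j' + 2) := h3
      _ ≤ (j' + 2) * stirling a' (j' + 2) := Nat.le_mul_of_pos_left _ (by omega)
  have : (s + 1) * t = s * t + t := by ring
  omega
end

section
/- Let k ≥ 2t+3 and n ≥ 2L(k,t), where L(k,t) = (t+1) + (k-t+1)·log₂((t+1)(k-t+1)). Then |H(n,k,t)| > |A(n,k,t)|, i.e., Σ_{j=1}^{k-t} (−1)^{j−1}·C(k-t,j)·S(n-ت-j, k-t-j) + t > (t+2)·S(n-t-1, k-t-1) − (t+1)·S(n-t-2, k-t-2). -/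
def surj (a b : ℕ) : ℕ := Nat.factorial b * stirling a b

lemma surj_zero_right (a : ℕ) : surj (a+1) 0 = 0 := by simp [surj, stirling]

lemma surj_succ (a b : ℕ) : surj (a+1) (b+1) = (b+1) * (surj a b + surj a (b+1)) := by
  simp only [surj, stirling, Nat.factorial_succ]
  ring

lemma surj_identity (a : ℕ) : ∀ b : ℕ,
    ∑ i ∈ Finset.range (b+1), Nat.choose b i * surj a i = b ^ a := by
  induction a with
  | zero =>
    intro b
    rw [Finset.sum_range_succ']
    have h0 : surj 0 0 = 1 := by simp [surj, stirling]
    have h1 : ∀ i, surj 0 (i+1) = 0 := by intro i; simp [surj, stirling]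
    simp [h0, h1]
  | succ a ih =>
    intro b
    rw [Finset.sum_range_succ']
    simp only [surj_zero_right, Nat.mul_zero, Nat.add_zero]
    match b with
    | 0 => simp
    | c+1 =>
      have key : ∀ i, Nat.choose (c+1) (i+1) * surj (a+1) (i+1)
          = (c+1) * (Nat.choose c i * surj a i + Nat.choose c i * surj a (i+1)) := by
        intro i
        rw [surj_succ]
        have h := Nat.add_one_mul_choose_eq c i
        calc Nat.choose (c+1) (i+1) * ((i+1) * (surj a i + surj a (i+1)))
            = (Nat.choose (c+1) (i+1) * (i+1)) * (surj a i + surj a (i+1)) := by ring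
          _ = ((c+1) * Nat.choose c i) * (surj a i + surj a (i+1)) := by rw [← h]
          _ = (c+1) * (Nat.choose c i * surj a i + Nat.choose c i * surj a (i+1)) := by ring
      rw [Finset.sum_congr rfl (fun i _ => key i), ← Finset.mul_sum, Finset.sum_add_distrib]
      have h1 : ∑ i ∈ Finset.range (c+1), Nat.choose c i * surj a i = c ^ a := ih c
      -- second sum: ∑_{i<c+1} C(c,i) surj a (i+1) = (c+1)^a - c^a
      have h2 : (∑ i ∈ Finset.range (c+1), Nat.choose c i * surj a (i+1)) + c ^ a
          = (c+1) ^ a := by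
        have pascal : ∀ i, Nat.choose (c+1) (i+1) = Nat.choose c i + Nat.choose c (i+1) :=
          fun i => Nat.choose_succ_succ c i
        have hA : ∑ i ∈ Finset.range (c+2), Nat.choose (c+1) i * surj a i = (c+1) ^ a := ih (c+1)
        have hA' : (∑ i ∈ Finset.range (c+1), Nat.choose (c+1) (i+1) * surj a (i+1))
            + surj a 0 = (c+1) ^ a := by
          rw [← hA, Finset.sum_range_succ' (fun i => Nat.choose (c+1) i * surj a i) (c+1)]
          simp only [Nat.choose_zero_right, Nat.one_mul]
        have hY : (∑ i ∈ Finset.range (c+1), Nat.choose c (i+1) * surj a (i+1))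
            + surj a 0 = c ^ a := by
          have := ih c
          rw [Finset.sum_range_succ'] at this
          rw [show (∑ i ∈ Finset.range (c+1), Nat.choose c (i+1) * surj a (i+1))
            = ∑ i ∈ Finset.range c, Nat.choose c (i+1) * surj a (i+1) by
              rw [Finset.sum_range_succ]; simp]
          simpa using this
        have split : ∑ i ∈ Finset.range (c+1), Nat.choose (c+1) (i+1) * surj a (i+1)
            = (∑ i ∈ Finset.range (c+1), Nat.choose c i * surj a (i+1))
              + ∑ i ∈ Finset.range (c+1), Nat.choose c (i+1) * surj a (i+1) := by
          rw [← Finset.sum_add_distrib]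
          exact Finset.sum_congr rfl (fun i _ => by rw [pascal i, Nat.add_mul])
        omega
      calc (c+1) * (∑ i ∈ Finset.range (c+1), Nat.choose c i * surj a i
            + ∑ i ∈ Finset.range (c+1), Nat.choose c i * surj a (i+1))
          = (c+1) * (c ^ a + ∑ i ∈ Finset.range (c+1), Nat.choose c i * surj a (i+1)) := by
            rw [h1]
        _ = (c+1) * ((c+1)^a) := by rw [show c ^ a + ∑ i ∈ Finset.range (c+1), Nat.choose c i * surj a (i+1) = (c+1)^a by omega]
        _ = (c+1) ^ (a+1) := by ring

lemma surj_le_pow (a b : ℕ) : surj a b ≤ b ^ a := by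
  have h := surj_identity a b
  rw [Finset.sum_range_succ] at h
  simp only [Nat.choose_self, Nat.one_mul] at h
  omega

lemma pow_le_surj_add (a b : ℕ) (hb : 1 ≤ b) : b ^ a ≤ surj a b + b * (b-1) ^ a := by
  obtain ⟨c, rfl⟩ := Nat.exists_eq_add_of_le hb
  have h := surj_identity a (1+c)
  rw [Finset.sum_range_succ] at h
  simp only [Nat.choose_self, Nat.one_mul] at h
  have hsub : (1+c) - 1 = c := by omega
  rw [hsub]
  have h2 : ∑ i ∈ Finset.range (1+c), Nat.choose (1+c) i * surj a i
      ≤ (1+c) * c ^ a := by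
    have hc : c ^ a = ∑ i ∈ Finset.range (c+1), Nat.choose c i * surj a i :=
      (surj_identity a c).symm
    rw [hc, Finset.mul_sum, show 1+c = c+1 by omega]
    apply Finset.sum_le_sum
    intro i hi
    have hi' : i ≤ c := by simpa using Nat.lt_succ_iff.mp (Finset.mem_range.mp hi)
    have key : Nat.choose (c+1) i ≤ (c+1) * Nat.choose c i := by
      have h1 : (c+1) * Nat.choose c i = Nat.choose (c+1) (i+1) * (i+1) := by
        simpa [Nat.succ_eq_add_one] using Nat.add_one_mul_choose_eq c i
      rw [h1, Nat.choose_succ_right_eq (c+1) i]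
      exact Nat.le_mul_of_pos_right _ (by omega)
    calc Nat.choose (c+1) i * surj a i ≤ ((c+1) * Nat.choose c i) * surj a i :=
          Nat.mul_le_mul_right _ key
      _ = (c+1) * (Nat.choose c i * surj a i) := by ring
  omega

lemma nat_bernoulli (x s : ℕ) : x ^ (s+1) + (s+1) * x ^ s ≤ (x+1) ^ (s+1) := by
  induction s with
  | zero => simp
  | succ s ih =>
    have : (x+1)^(s+2) = (x+1) * (x+1)^(s+1) := by ring
    rw [this]
    calc x ^ (s+2) + (s+2) * x ^ (s+1)
        ≤ x ^ (s+2) + (s+2) * x ^ (s+1) + (s+1) * x ^ s := Nat.le_add_right _ _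
      _ = (x+1) * (x ^ (s+1) + (s+1) * x ^ s) := by ring
      _ ≤ (x+1) * (x+1)^(s+1) := Nat.mul_le_mul_left _ ih

lemma Kpow (M : ℕ) (hM : 3 ≤ M) (T : ℝ) (hT : 1 ≤ T) (e : ℕ)
    (he : (M:ℝ) * (2 * Real.logb 2 T - 1) ≤ (e:ℝ)) :
    (((M:ℝ)-1)/M)^e ≤ 2 / T^2 := by
  have hM0 : (0:ℝ) < M := by positivity
  have hM1 : (1:ℝ) ≤ M := by exact_mod_cast (by omega : 1 ≤ M)
  set r : ℝ := ((M:ℝ)-1)/M with hr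
  have hr0 : 0 ≤ r := by
    apply div_nonneg _ (le_of_lt hM0); linarith
  have hhalf : r ^ M ≤ 1/2 := by
    have hnat : 2 * (M-1) ^ M ≤ M ^ M := by
      have h := nat_bernoulli (M-1) (M-1)
      have h1 : (M-1) + 1 = M := by omega
      rw [h1] at h
      have h2 : (M-1) * (M-1)^(M-1) ≤ ((M-1)+1) * (M-1)^(M-1) := Nat.mul_le_mul_right _ (by omega)
      have h3 : (M-1)^M = (M-1) * (M-1)^(M-1) := by
        rw [← pow_succ', h1]
      rw [h1] at h2
      omega
    have hme : ((M-1:ℕ):ℝ) = (M:ℝ) - 1 := by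
      push_cast [Nat.cast_sub (by omega : 1 ≤ M)]; ring
    have hcast : 2 * (((M:ℝ))-1) ^ M ≤ (M:ℝ) ^ M := by
      rw [← hme]; exact_mod_cast hnat
    rw [hr, div_pow, div_le_div_iff₀ (by positivity) (by norm_num)]
    linarith
  have hrle : r ≤ (1/2 : ℝ) ^ ((M:ℝ)⁻¹) := by
    have h1 : (r ^ M : ℝ) ^ ((M:ℝ)⁻¹) ≤ (1/2 : ℝ) ^ ((M:ℝ)⁻¹) :=
      Real.rpow_le_rpow (by positivity) hhalf (by positivity)
    rwa [← Real.rpow_natCast r M, ← Real.rpow_mul hr0, mul_inv_cancel₀ (ne_of_gt hM0),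
      Real.rpow_one] at h1
  have step1 : r ^ e ≤ ((1/2 : ℝ) ^ ((M:ℝ)⁻¹)) ^ e := pow_le_pow_left₀ hr0 hrle e
  have step2 : ((1/2 : ℝ) ^ ((M:ℝ)⁻¹)) ^ e = (1/2 : ℝ) ^ ((M:ℝ)⁻¹ * e) := by
    rw [← Real.rpow_natCast ((1/2 : ℝ) ^ ((M:ℝ)⁻¹)) e, ← Real.rpow_mul (by norm_num)]
  have step3 : (1/2 : ℝ) ^ ((M:ℝ)⁻¹ * e) ≤ (1/2 : ℝ) ^ (2 * Real.logb 2 T - 1) := by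
    apply Real.rpow_le_rpow_of_exponent_ge (by norm_num) (by norm_num)
    rw [← sub_nonneg]
    have heq : (M:ℝ)⁻¹ * e - (2 * Real.logb 2 T - 1)
        = (M:ℝ)⁻¹ * ((e:ℝ) - (M:ℝ) * (2 * Real.logb 2 T - 1)) := by
      field_simp
    rw [heq]
    exact mul_nonneg (by positivity) (by linarith)
  have step4 : (1/2 : ℝ) ^ (2 * Real.logb 2 T - 1) = 2 / T^2 := by
    have hT0 : (0:ℝ) < T := by linarith
    have h2T : (2:ℝ) ^ (Real.logb 2 T) = T := Real.rpow_logb (by norm_num) (by norm_num) hT0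
    have : (1/2 : ℝ) ^ (2 * Real.logb 2 T - 1)
        = ((2:ℝ) ^ (2 * Real.logb 2 T - 1))⁻¹ := by
      rw [one_div, ← Real.inv_rpow (by norm_num : (0:ℝ) ≤ 2)]
    rw [this, Real.rpow_sub (by norm_num), Real.rpow_one, mul_comm (2:ℝ),
      Real.rpow_mul (by norm_num), h2T]
    rw [show ((2:ℝ):ℝ) = ((2:ℕ):ℝ) by norm_num, Real.rpow_natCast]
    field_simp
  calc r ^ e ≤ ((1/2 : ℝ) ^ ((M:ℝ)⁻¹)) ^ e := step1
    _ = (1/2 : ℝ) ^ ((M:ℝ)⁻¹ * e) := step2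
    _ ≤ (1/2 : ℝ) ^ (2 * Real.logb 2 T - 1) := step3
    _ = 2 / T^2 := step4

set_option maxHeartbeats 1000000 in
lemma core (t m N : ℕ) (ht : 1 ≤ t) (hm : t + 3 ≤ m)
    (hN : ((t:ℝ)) + 2 + 2*((m:ℝ)+1)*Real.logb 2 (((t:ℝ)+1)*((m:ℝ)+1)) ≤ (N:ℝ)) :
    ∑ j ∈ Finset.Icc 2 m, Nat.choose m j * stirling (N-j) (m-j) < stirling (N-1) (m-1) := by
  have hm4 : 4 ≤ m := by omega
  have htR : (1:ℝ) ≤ t := by exact_mod_cast ht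
  have hmR : (4:ℝ) ≤ m := by exact_mod_cast hm4
  set T : ℝ := ((t:ℝ)+1)*((m:ℝ)+1) with hTdef
  set L : ℝ := Real.logb 2 T with hLdef
  have hT2m : 2*((m:ℝ)+1) ≤ T := by nlinarith
  have hT1 : (1:ℝ) ≤ T := by nlinarith
  have hT0 : (0:ℝ) < T := by linarith
  have hL1 : (1:ℝ) ≤ L := by
    rw [hLdef]
    rw [Real.le_logb_iff_rpow_le (by norm_num : (1:ℝ) < 2) hT0, Real.rpow_one]
    nlinarith
  have hNmR : ((m:ℝ)) + 2 ≤ N := by nlinarith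
  have hNm : m + 2 ≤ N := by
    have h : ((m+2:ℕ):ℝ) ≤ (N:ℝ) := by push_cast; linarith
    exact_mod_cast h
  set M1 : ℝ := ((m-1 : ℕ) : ℝ) with hM1def
  set M2 : ℝ := ((m-2 : ℕ) : ℝ) with hM2def
  have hM1eq : M1 = (m:ℝ) - 1 := by rw [hM1def]; push_cast [Nat.cast_sub (by omega : 1 ≤ m)]; ring
  have hM2eq : M2 = (m:ℝ) - 2 := by rw [hM2def]; push_cast [Nat.cast_sub (by omega : 2 ≤ m)]; ring
  have hM1pos : (0:ℝ) < M1 := by rw [hM1eq]; linarith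
  have hM2nonneg : (0:ℝ) ≤ M2 := by rw [hM2eq]; linarith
  -- Key decay estimate
  have K : ∀ j : ℕ, 1 ≤ j → j ≤ m → (M2/M1) ^ (N-j) ≤ 2/T^2 := by
    intro j hj1 hjm
    have h21 : M2 = M1 - 1 := by rw [hM1eq, hM2eq]; ring
    have he : ((m-1:ℕ):ℝ) * (2 * L - 1) ≤ ((N-j : ℕ):ℝ) := by
      rw [← hM1def, hM1eq]
      have hjR : (j:ℝ) ≤ m := by exact_mod_cast hjm
      have hNj : ((N-j:ℕ):ℝ) = (N:ℝ) - j := by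
        push_cast [Nat.cast_sub (by omega : j ≤ N)]; ring
      rw [hNj]
      nlinarith
    have := Kpow (m-1) (by omega) T hT1 (N-j) he
    rwa [← hM1def, ← h21] at this
  -- per-term upper bound
  have perterm : ∀ j ∈ Finset.Icc 2 m,
      ((Nat.choose m j : ℕ) : ℝ) * ((Nat.descFactorial (m-1) (j-1) : ℕ) : ℝ) * ((m-j:ℕ):ℝ)^(N-j)
        ≤ ((m:ℝ)/2) * (1/(2*(m:ℝ)))^(j-1) * M1^(N-1) := by
    intro j hj
    rw [Finset.mem_Icc] at hj
    obtain ⟨hj2, hjm⟩ := hj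
    have hmjR : ((m-j:ℕ):ℝ) = (m:ℝ) - j := by
      push_cast [Nat.cast_sub hjm]; ring
    have hj1R : ((j-1:ℕ):ℝ) = (j:ℝ) - 1 := by
      push_cast [Nat.cast_sub (by omega : 1 ≤ j)]; ring
    -- Bernoulli: (m-j) ≤ M1 * r^(j-1)
    have hM1ne : (m:ℝ) - 1 ≠ 0 := ne_of_gt (by linarith)
    have hA : ((m-j:ℕ):ℝ) ≤ M1 * (M2/M1)^(j-1) := by
      have hm1inv : (1:ℝ)/M1 ≤ 2 := by
        rw [hM1eq, div_le_iff₀ (by linarith : (0:ℝ) < (m:ℝ)-1)]; nlinarith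
      have hber := one_add_mul_le_pow (a := -1/M1) (by rw [neg_div]; linarith) (j-1)
      have hbase : 1 + (-1/M1) = M2/M1 := by
        rw [hM1eq, hM2eq]; field_simp; ring
      rw [hbase] at hber
      have := mul_le_mul_of_nonneg_left hber (le_of_lt hM1pos)
      calc ((m-j:ℕ):ℝ) = M1 * (1 + ((j-1:ℕ):ℝ) * (-1/M1)) := by
            rw [hmjR, hj1R, hM1eq]; field_simp; try ring
        _ ≤ M1 * (M2/M1)^(j-1) := this
    have hApow : ((m-j:ℕ):ℝ)^(N-j) ≤ M1^(N-j) * ((M2/M1)^(N-j))^(j-1) := by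
      calc ((m-j:ℕ):ℝ)^(N-j) ≤ (M1 * (M2/M1)^(j-1))^(N-j) :=
            pow_le_pow_left₀ (by positivity) hA _
        _ = M1^(N-j) * ((M2/M1)^(N-j))^(j-1) := by
            rw [mul_pow, ← pow_mul, ← pow_mul, mul_comm (j-1) (N-j)]
    have hA4 : ((M2/M1)^(N-j))^(j-1) ≤ (2/T^2)^(j-1) :=
      pow_le_pow_left₀ (by positivity) (K j (by omega) hjm) _
    have hB : ((Nat.descFactorial (m-1) (j-1) : ℕ) : ℝ) ≤ M1^(j-1) := by
      rw [hM1def]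
      exact_mod_cast Nat.descFactorial_le_pow _ _
    have hC : ((Nat.choose m j : ℕ) : ℝ) * 2 ≤ (m:ℝ)^j := by
      have h1 : Nat.choose m j * 2 ≤ m ^ j := by
        have h2 : (2:ℕ) ≤ Nat.factorial j :=
          le_trans (by norm_num) (Nat.factorial_le hj2)
        have h3 : Nat.factorial j * Nat.choose m j ≤ m ^ j := by
          rw [← Nat.descFactorial_eq_factorial_mul_choose]
          exact Nat.descFactorial_le_pow _ _
        calc Nat.choose m j * 2 ≤ Nat.choose m j * Nat.factorial j :=
              Nat.mul_le_mul_left _ h2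
          _ = Nat.factorial j * Nat.choose m j := Nat.mul_comm _ _
          _ ≤ m ^ j := h3
      exact_mod_cast h1
    have hMsplit : M1^(j-1) * M1^(N-j) = M1^(N-1) := by
      rw [← pow_add]; congr 1; omega
    have hTsq : (2*((m:ℝ)+1))*(2*((m:ℝ)+1)) ≤ T*T :=
      mul_le_mul hT2m hT2m (by positivity) (by linarith)
    have h2mT : 2*(m:ℝ)/T^2 ≤ 1/(2*(m:ℝ)) := by
      rw [div_le_div_iff₀ (by positivity) (by positivity)]
      nlinarith [hTsq]
    have e1 : (m:ℝ)^j = (m:ℝ)*(m:ℝ)^(j-1) := by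
      conv_lhs => rw [show j = 1 + (j-1) by omega]
      rw [pow_add, pow_one]
    have e2 : ∀ x : ℝ, (2/T^2)^(j-1)*(m:ℝ)^(j-1) = (2*(m:ℝ)/T^2)^(j-1) := by
      intro x; rw [← mul_pow]; congr 1; ring
    calc ((Nat.choose m j : ℕ) : ℝ) * ((Nat.descFactorial (m-1) (j-1) : ℕ) : ℝ) * ((m-j:ℕ):ℝ)^(N-j)
        ≤ ((Nat.choose m j : ℕ) : ℝ) * M1^(j-1) * (M1^(N-j) * (2/T^2)^(j-1)) := by
          have hpow : ((m-j:ℕ):ℝ)^(N-j) ≤ M1^(N-j) * (2/T^2)^(j-1) :=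
            le_trans hApow (by gcongr)
          gcongr
      _ = ((Nat.choose m j : ℕ) : ℝ) * (2/T^2)^(j-1) * M1^(N-1) := by
          rw [← hMsplit]; ring
      _ ≤ ((m:ℝ)^j/2) * (2/T^2)^(j-1) * M1^(N-1) := by
          gcongr
          linarith
      _ = ((m:ℝ)/2) * (2*(m:ℝ)/T^2)^(j-1) * M1^(N-1) := by
          rw [← e2 0, e1]; ring
      _ ≤ ((m:ℝ)/2) * (1/(2*(m:ℝ)))^(j-1) * M1^(N-1) := by
          gcongr
  have hTsq0 : (2*((m:ℝ)+1))*(2*((m:ℝ)+1)) ≤ T*T :=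
    mul_le_mul hT2m hT2m (by positivity) (by linarith)
  have hmne : (m:ℝ) ≠ 0 := by positivity
  -- sum upper bound in ℝ
  have hsum : ∑ j ∈ Finset.Icc 2 m,
      ((Nat.choose m j : ℕ) : ℝ) * ((Nat.descFactorial (m-1) (j-1) : ℕ) : ℝ) * ((m-j:ℕ):ℝ)^(N-j)
      ≤ (3/8) * M1^(N-1) := by
    have hsplit : Finset.Icc 2 m = insert 2 (Finset.Icc 3 m) := by
      ext x; simp only [Finset.mem_Icc, Finset.mem_insert]; omega
    have h2notin : (2:ℕ) ∉ Finset.Icc 3 m := by simp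
    have hterm2 : ((Nat.choose m 2 : ℕ) : ℝ) * ((Nat.descFactorial (m-1) 1 : ℕ) : ℝ)
        * ((m-2:ℕ):ℝ)^(N-2) ≤ (1/4) * M1^(N-1) := by
      have h := perterm 2 (by simp only [Finset.mem_Icc]; omega)
      have hq : (m:ℝ)/2 * (1/(2*(m:ℝ))) = 1/4 := by
        field_simp
        ring
      have heq : ((m:ℝ)/2) * (1/(2*(m:ℝ)))^(2-1) * M1^(N-1) = (1/4) * M1^(N-1) := by
        rw [show (2-1:ℕ) = 1 from rfl, pow_one, hq]
      rw [heq] at h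
      exact h
    have htail : ∑ j ∈ Finset.Icc 3 m,
        ((Nat.choose m j : ℕ) : ℝ) * ((Nat.descFactorial (m-1) (j-1) : ℕ) : ℝ) * ((m-j:ℕ):ℝ)^(N-j)
        ≤ (1/8) * M1^(N-1) := by
      have hstep : ∀ j ∈ Finset.Icc 3 m,
          ((Nat.choose m j : ℕ) : ℝ) * ((Nat.descFactorial (m-1) (j-1) : ℕ) : ℝ) * ((m-j:ℕ):ℝ)^(N-j)
          ≤ (1/(8*(m:ℝ))) * M1^(N-1) := by
        intro j hj
        rw [Finset.mem_Icc] at hj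
        refine le_trans (perterm j (by simp only [Finset.mem_Icc]; omega)) ?_
        have hple : (1/(2*(m:ℝ)))^(j-1) ≤ (1/(2*(m:ℝ)))^2 :=
          pow_le_pow_of_le_one (by positivity)
            (by rw [div_le_one (by positivity)]; linarith) (by omega)
        have heq2 : ((m:ℝ)/2) * (1/(2*(m:ℝ)))^2 = 1/(8*(m:ℝ)) := by
          field_simp; ring
        calc ((m:ℝ)/2) * (1/(2*(m:ℝ)))^(j-1) * M1^(N-1)
            ≤ ((m:ℝ)/2) * (1/(2*(m:ℝ)))^2 * M1^(N-1) := by gcongr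
          _ = (1/(8*(m:ℝ))) * M1^(N-1) := by rw [heq2]
      calc ∑ j ∈ Finset.Icc 3 m,
          ((Nat.choose m j : ℕ) : ℝ) * ((Nat.descFactorial (m-1) (j-1) : ℕ) : ℝ) * ((m-j:ℕ):ℝ)^(N-j)
          ≤ ∑ _j ∈ Finset.Icc 3 m, (1/(8*(m:ℝ))) * M1^(N-1) := Finset.sum_le_sum hstep
        _ = ((m-2 : ℕ):ℝ) * ((1/(8*(m:ℝ))) * M1^(N-1)) := by
            rw [Finset.sum_const, Nat.card_Icc, nsmul_eq_mul, show m+1-3 = m-2 by omega]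
        _ ≤ (1/8) * M1^(N-1) := by
            have h8 : ((m-2:ℕ):ℝ) * (1/(8*(m:ℝ))) ≤ 1/8 := by
              rw [← hM2def, hM2eq, mul_one_div, div_le_div_iff₀ (by positivity) (by norm_num)]
              linarith
            calc ((m-2:ℕ):ℝ) * ((1/(8*(m:ℝ))) * M1^(N-1))
                = (((m-2:ℕ):ℝ) * (1/(8*(m:ℝ)))) * M1^(N-1) := by ring
              _ ≤ (1/8) * M1^(N-1) := mul_le_mul_of_nonneg_right h8 (by positivity)
    rw [hsplit, Finset.sum_insert h2notin]
    linarith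
  -- ℕ-side: factorial times each term
  have hnatup : Nat.factorial (m-1) * ∑ j ∈ Finset.Icc 2 m, Nat.choose m j * stirling (N-j) (m-j)
      ≤ ∑ j ∈ Finset.Icc 2 m, Nat.choose m j * Nat.descFactorial (m-1) (j-1) * (m-j)^(N-j) := by
    rw [Finset.mul_sum]
    apply Finset.sum_le_sum
    intro j hj
    rw [Finset.mem_Icc] at hj
    have hfac : Nat.factorial (m-1) = Nat.descFactorial (m-1) (j-1) * Nat.factorial (m-j) := by
      have h := Nat.factorial_mul_descFactorial (by omega : j-1 ≤ m-1)
      rw [show m-1-(j-1) = m-j by omega] at h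
      rw [← h]; ring
    have hsurj : Nat.factorial (m-j) * stirling (N-j) (m-j) ≤ (m-j)^(N-j) := surj_le_pow _ _
    calc Nat.factorial (m-1) * (Nat.choose m j * stirling (N-j) (m-j))
        = Nat.choose m j * Nat.descFactorial (m-1) (j-1)
            * (Nat.factorial (m-j) * stirling (N-j) (m-j)) := by rw [hfac]; ring
      _ ≤ Nat.choose m j * Nat.descFactorial (m-1) (j-1) * (m-j)^(N-j) :=
          Nat.mul_le_mul_left _ hsurj
  have hup : ((Nat.factorial (m-1) : ℕ):ℝ)
      * ((∑ j ∈ Finset.Icc 2 m, Nat.choose m j * stirling (N-j) (m-j) : ℕ) : ℝ)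
      ≤ (3/8) * M1^(N-1) := by
    calc ((Nat.factorial (m-1) : ℕ):ℝ)
        * ((∑ j ∈ Finset.Icc 2 m, Nat.choose m j * stirling (N-j) (m-j) : ℕ) : ℝ)
        = ((Nat.factorial (m-1) * ∑ j ∈ Finset.Icc 2 m, Nat.choose m j * stirling (N-j) (m-j) : ℕ) : ℝ) := by
          push_cast; ring
      _ ≤ ((∑ j ∈ Finset.Icc 2 m, Nat.choose m j * Nat.descFactorial (m-1) (j-1) * (m-j)^(N-j) : ℕ) : ℝ) := by
          exact_mod_cast hnatup
      _ = ∑ j ∈ Finset.Icc 2 m,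
          ((Nat.choose m j : ℕ) : ℝ) * ((Nat.descFactorial (m-1) (j-1) : ℕ) : ℝ) * ((m-j:ℕ):ℝ)^(N-j) := by
          push_cast; rfl
      _ ≤ (3/8) * M1^(N-1) := hsum
  -- lower bound on the main term
  have hlow : (9/10) * M1^(N-1)
      ≤ ((Nat.factorial (m-1) : ℕ):ℝ) * ((stirling (N-1) (m-1) : ℕ) : ℝ) := by
    have hnat := pow_le_surj_add (N-1) (m-1) (by omega)
    rw [show (m-1)-1 = m-2 by omega] at hnat
    simp only [surj] at hnat
    have hcast : M1^(N-1) ≤ ((Nat.factorial (m-1) : ℕ):ℝ) * ((stirling (N-1) (m-1) : ℕ) : ℝ)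
        + M1 * M2^(N-1) := by
      rw [hM1def, hM2def]
      exact_mod_cast hnat
    have heps : M1 * M2^(N-1) ≤ (1/10) * M1^(N-1) := by
      have hK1 : (M2/M1)^(N-1) ≤ 2/T^2 := K 1 le_rfl (by omega)
      have hM2pow : M2^(N-1) = (M2/M1)^(N-1) * M1^(N-1) := by
        rw [div_pow]
        field_simp
      have h20 : M1 * (2/T^2) ≤ 1/10 := by
        have hT2pos : (0:ℝ) < T^2 := by positivity
        have : M1 * (2/T^2) = (2*M1)/T^2 := by ring
        rw [this, div_le_div_iff₀ hT2pos (by norm_num)]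
        rw [hM1eq]
        nlinarith [hTsq0]
      calc M1 * M2^(N-1) = (M1 * (M2/M1)^(N-1)) * M1^(N-1) := by rw [hM2pow]; ring
        _ ≤ (M1 * (2/T^2)) * M1^(N-1) := by
            gcongr
        _ ≤ (1/10) * M1^(N-1) := by gcongr
    linarith
  -- conclude
  have hM1Npos : (0:ℝ) < M1^(N-1) := by positivity
  have hfacpos : (0:ℝ) < ((Nat.factorial (m-1) : ℕ):ℝ) := by
    exact_mod_cast Nat.factorial_pos (m-1)
  have hlt2 : ((∑ j ∈ Finset.Icc 2 m, Nat.choose m j * stirling (N-j) (m-j) : ℕ) : ℝ)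
      < ((stirling (N-1) (m-1) : ℕ) : ℝ) := by
    have hmul : ((Nat.factorial (m-1) : ℕ):ℝ)
        * ((∑ j ∈ Finset.Icc 2 m, Nat.choose m j * stirling (N-j) (m-j) : ℕ) : ℝ)
        < ((Nat.factorial (m-1) : ℕ):ℝ) * ((stirling (N-1) (m-1) : ℕ) : ℝ) := by
      calc ((Nat.factorial (m-1) : ℕ):ℝ)
          * ((∑ j ∈ Finset.Icc 2 m, Nat.choose m j * stirling (N-j) (m-j) : ℕ) : ℝ)
          ≤ (3/8) * M1^(N-1) := hup
        _ < (9/10) * M1^(N-1) := by nlinarith [hM1Npos]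
        _ ≤ _ := hlow
    exact lt_of_mul_lt_mul_left hmul (le_of_lt hfacpos)
  exact_mod_cast hlt2


theorem stmt_18 (k t n : ℕ) (ht : 1 ≤ t) (hk : 2 * t + 3 ≤ k) (hn : (n : ℝ) ≥ 2 * Lkt k t) :
    (∑ j ∈ Finset.Icc 1 (k - t),
        (-1 : ℤ) ^ (j - 1) * Nat.choose (k - t) j * stirling (n - t - j) (k - t - j)) + t >
      ((t : ℤ) + 2) * stirling (n - t - 1) (k - t - 1) -
        ((t : ℤ) + 1) * stirling (n - t - 2) (k - t - 2) := by
  set m := k - t with hmdef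
  set N := n - t with hNdef
  have hm : t + 3 ≤ m := by omega
  have hmR : (m:ℝ) = (k:ℝ) - t := by
    rw [hmdef]; push_cast [Nat.cast_sub (by omega : t ≤ k)]; ring
  have hLkt : 2 * Lkt k t
      = 2*((t:ℝ)+1) + 2*((m:ℝ)+1)*Real.logb 2 (((t:ℝ)+1)*((m:ℝ)+1)) := by
    rw [Lkt, hmR]; ring
  have hL0 : 0 ≤ Real.logb 2 (((t:ℝ)+1)*((m:ℝ)+1)) := by
    apply Real.logb_nonneg (by norm_num)
    have h1 : (0:ℝ) ≤ t := Nat.cast_nonneg t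
    have h2 : (0:ℝ) ≤ m := Nat.cast_nonneg m
    nlinarith
  have hnt : t + 2 ≤ n := by
    have htR : (1:ℝ) ≤ t := by exact_mod_cast ht
    have h : ((t+2:ℕ):ℝ) ≤ (n:ℝ) := by
      rw [hLkt] at hn
      push_cast
      nlinarith
    exact_mod_cast h
  have hNreal : ((t:ℝ)) + 2 + 2*((m:ℝ)+1)*Real.logb 2 (((t:ℝ)+1)*((m:ℝ)+1)) ≤ (N:ℝ) := by
    have hNc : (N:ℝ) = (n:ℝ) - t := by
      rw [hNdef]; push_cast [Nat.cast_sub (by omega : t ≤ n)]; ring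
    rw [hLkt] at hn
    rw [hNc]
    linarith
  have hcore := core t m N ht hm hNreal
  -- move to ℤ
  have hcoreZ : (∑ j ∈ Finset.Icc 2 m, (Nat.choose m j : ℤ) * (stirling (N-j) (m-j) : ℤ))
      < (stirling (N-1) (m-1) : ℤ) := by
    have := hcore
    have hc : ((∑ j ∈ Finset.Icc 2 m, Nat.choose m j * stirling (N-j) (m-j) : ℕ) : ℤ)
        < ((stirling (N-1) (m-1) : ℕ) : ℤ) := by exact_mod_cast this
    calc ∑ j ∈ Finset.Icc 2 m, (Nat.choose m j : ℤ) * (stirling (N-j) (m-j) : ℤ)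
        = ((∑ j ∈ Finset.Icc 2 m, Nat.choose m j * stirling (N-j) (m-j) : ℕ) : ℤ) := by
          push_cast; rfl
      _ < _ := hc
  have hsplit : Finset.Icc 1 m = insert 1 (Finset.Icc 2 m) := by
    ext x; simp only [Finset.mem_Icc, Finset.mem_insert]; omega
  have h1notin : (1:ℕ) ∉ Finset.Icc 2 m := by simp
  rw [hsplit, Finset.sum_insert h1notin]
  have hterm1 : (-1 : ℤ) ^ (1 - 1) * (Nat.choose m 1 : ℤ) * (stirling (N-1) (m-1) : ℤ)
      = (m : ℤ) * (stirling (N-1) (m-1) : ℤ) := by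
    rw [show (1-1 : ℕ) = 0 from rfl, pow_zero, one_mul, Nat.choose_one_right]
  have hsum_ge : ∑ j ∈ Finset.Icc 2 m, (-1 : ℤ) ^ (j - 1) * (Nat.choose m j : ℤ)
        * (stirling (N-j) (m-j) : ℤ)
      ≥ -∑ j ∈ Finset.Icc 2 m, (Nat.choose m j : ℤ) * (stirling (N-j) (m-j) : ℤ) := by
    rw [← Finset.sum_neg_distrib]
    apply Finset.sum_le_sum
    intro j hj
    have hnn : (0:ℤ) ≤ (Nat.choose m j : ℤ) * (stirling (N-j) (m-j) : ℤ) := by positivity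
    rcases Nat.even_or_odd (j-1) with he | ho
    · rw [he.neg_one_pow]; nlinarith
    · rw [ho.neg_one_pow]; nlinarith
  have hmul : ((t:ℤ)+3) * (stirling (N-1) (m-1) : ℤ) ≤ (m:ℤ) * (stirling (N-1) (m-1) : ℤ) := by
    apply mul_le_mul_of_nonneg_right _ (by positivity)
    exact_mod_cast hm
  have hS2 : (0:ℤ) ≤ (stirling (N-2) (m-2) : ℤ) := by positivity
  have htZ : (0:ℤ) ≤ (t:ℤ) := by positivity
  rw [hterm1]
  have h1 : (0:ℤ) ≤ ((t:ℤ)+1) * (stirling (N-2) (m-2) : ℤ) := by positivity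
  linarith [hcoreZ, hsum_ge, hmul]
end
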